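/- arXiv:1607.03092 — 9 statements merged into one kernel-verified Lean document; each statement's English description precedes it below -/
import Mathlib

section
/- The function g̃ is convex on ℝ. (More precisely, its second derivative g̃''(x) = 3a(x−x̃)² + 2b(x−x̃) + c + max(b²/(3a) − c, 0) is nonnegative for every x ∈ ℝ.) -/
/-- With `a = 4`, `b = 12 * xt`, the regularized function
`g̃(x) = g(x) + (c̃/2)(x - x̃)²` is convex on ℝ. -/
theorem stmt_0 (xt c d : ℝ) (a b : ℝ) (ha : a = 4) (hb : b = 12 * xt)
    (g : ℝ → ℝ)
    (hg : ∀ x, g x = (a / 4) * (x - xt) ^ 4 + (b / 3) * (x - xt) ^ 3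
      + (c / 2) * (x - xt) ^ 2 + d * (x - xt))
    (ctil : ℝ) (hctil : ctil = max (b ^ 2 / (3 * a) - c) 0)
    (gtil : ℝ → ℝ) (hgtil : ∀ x, gtil x = g x + (ctil / 2) * (x - xt) ^ 2) :
    ConvexOn ℝ Set.univ gtil := by
  have hfun : gtil = fun x => (x - xt) ^ 4 + 4 * xt * (x - xt) ^ 3
      + ((c + ctil) / 2) * (x - xt) ^ 2 + d * (x - xt) := by
    funext x
    rw [hgtil, hg, ha, hb]; ring
  rw [hfun]
  set F : ℝ → ℝ := fun x => (x - xt) ^ 4 + 4 * xt * (x - xt) ^ 3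
      + ((c + ctil) / 2) * (x - xt) ^ 2 + d * (x - xt) with hF
  have hd1 : ∀ x : ℝ, HasDerivAt F
      (4 * (x - xt) ^ 3 + 12 * xt * (x - xt) ^ 2 + (c + ctil) * (x - xt) + d) x := by
    intro x
    have h0 : HasDerivAt (fun y : ℝ => y - xt) 1 x := (hasDerivAt_id x).sub_const xt
    have h1 := h0.pow 4
    have h2 := (h0.pow 3).const_mul (4 * xt)
    have h3 := (h0.pow 2).const_mul ((c + ctil) / 2)
    have h4 := h0.const_mul d
    have := ((h1.add h2).add h3).add h4
    exact this.congr_deriv (by push_cast; ring)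
  have hd2 : ∀ x : ℝ, HasDerivAt (deriv F)
      (12 * (x - xt) ^ 2 + 24 * xt * (x - xt) + (c + ctil)) x := by
    intro x
    have hdF : deriv F = fun x => 4 * (x - xt) ^ 3 + 12 * xt * (x - xt) ^ 2
        + (c + ctil) * (x - xt) + d := by
      funext y; exact (hd1 y).deriv
    rw [hdF]
    have h0 : HasDerivAt (fun y : ℝ => y - xt) 1 x := (hasDerivAt_id x).sub_const xt
    have h1 := (h0.pow 3).const_mul (4 : ℝ)
    have h2 := (h0.pow 2).const_mul (12 * xt)
    have h3 := h0.const_mul (c + ctil)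
    have := ((h1.add h2).add h3).add_const d
    exact this.congr_deriv (by push_cast; ring)
  refine convexOn_of_deriv2_nonneg' convex_univ
    (fun x _ => ((hd1 x).differentiableAt).differentiableWithinAt)
    (fun x _ => ((hd2 x).differentiableAt).differentiableWithinAt) ?_
  intro x _
  have hder2 : deriv^[2] F x = 12 * (x - xt) ^ 2 + 24 * xt * (x - xt) + (c + ctil) := by
    simp only [Function.iterate_succ, Function.iterate_zero, Function.comp_apply, id_eq]
    exact (hd2 x).deriv
  rw [hder2]
  have hct : 12 * xt ^ 2 - c ≤ ctil := by
    rw [hctil, ha, hb]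
    have : (12 * xt) ^ 2 / (3 * 4) = 12 * xt ^ 2 := by ring
    rw [this]
    exact le_max_left _ _
  nlinarith [sq_nonneg x, hct]
end

section
/- The minimization problem min { g̃(x) : x ≥ 0 } has a unique optimal solution; that is, there exists exactly one x* ≥ 0 such that g̃(x*) ≤ g̃(x) for all x ≥ 0. -/
lemma coercive_aux (A Kb D Vb u xtv K dv V : ℝ)
    (hKb : 0 ≤ Kb) (hD : 0 ≤ D) (hVb : 0 ≤ Vb)
    (hu : 1 + 4 * A + Kb / 2 + D + Vb ≤ u)
    (h1 : -A ≤ xtv) (h2 : -Kb ≤ K) (h3 : -D ≤ dv) (h4 : V ≤ Vb) (hA : 0 ≤ A) :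
    V ≤ u ^ 4 + 4 * xtv * u ^ 3 + (K / 2) * u ^ 2 + dv * u := by
  have hu1 : (1:ℝ) ≤ u := by linarith
  have hu0 : (0:ℝ) ≤ u := by linarith
  have hu3 : (0:ℝ) ≤ u ^ 3 := by positivity
  have e1 : -(4 * A) * u ^ 3 ≤ 4 * xtv * u ^ 3 := by nlinarith
  have e2 : -(Kb / 2) * u ^ 2 ≤ (K / 2) * u ^ 2 := by nlinarith [sq_nonneg u]
  have e3 : -D * u ≤ dv * u := by nlinarith
  have k1 : u ^ 3 * (1 + Kb / 2 + D + Vb) ≤ u ^ 3 * (u - 4 * A) :=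
    mul_le_mul_of_nonneg_left (by linarith) hu3
  have k2 : u ^ 2 ≤ u ^ 3 := by nlinarith [mul_nonneg (sq_nonneg u) (show (0:ℝ) ≤ u - 1 by linarith)]
  have k3 : u ≤ u ^ 3 := by nlinarith [mul_nonneg hu0 (show (0:ℝ) ≤ u ^ 2 - 1 by nlinarith)]
  have k4 : (1:ℝ) ≤ u ^ 3 := by linarith
  have key : Vb ≤ u ^ 4 - (4 * A) * u ^ 3 - (Kb / 2) * u ^ 2 - D * u := by
    nlinarith [mul_nonneg hKb (sub_nonneg.2 k2), mul_nonneg hD (sub_nonneg.2 k3),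
      mul_nonneg hVb (sub_nonneg.2 k4)]
  linarith

set_option maxHeartbeats 1000000 in
/-- the problem `min { g̃(x) : x ≥ 0 }` has a unique optimal solution:
there is exactly one `x* ≥ 0` with `g̃(x*) ≤ g̃(x)` for all `x ≥ 0`. -/
theorem stmt_2 (xt c d : ℝ) (a b : ℝ) (ha : a = 4) (hb : b = 12 * xt)
    (g : ℝ → ℝ)
    (hg : ∀ x, g x = (a / 4) * (x - xt) ^ 4 + (b / 3) * (x - xt) ^ 3
      + (c / 2) * (x - xt) ^ 2 + d * (x - xt))
    (ctil : ℝ) (hctil : ctil = max (b ^ 2 / (3 * a) - c) 0)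
    (gtil : ℝ → ℝ) (hgtil : ∀ x, gtil x = g x + (ctil / 2) * (x - xt) ^ 2) :
    ∃! xstar : ℝ, 0 ≤ xstar ∧ ∀ x : ℝ, 0 ≤ x → gtil xstar ≤ gtil x := by
  set K : ℝ := c + ctil with hKdef
  have hK : 12 * xt ^ 2 ≤ K := by
    have : 12 * xt ^ 2 - c ≤ ctil := by
      rw [hctil, ha, hb]; calc 12 * xt ^ 2 - c = (12*xt)^2/(3*4) - c := by ring
        _ ≤ max ((12*xt) ^ 2 / (3 * 4) - c) 0 := le_max_left _ _
    linarith
  have hF : gtil = fun x => (x - xt) ^ 4 + 4 * xt * (x - xt) ^ 3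
      + (K / 2) * (x - xt) ^ 2 + d * (x - xt) := by
    funext x; rw [hgtil, hg, ha, hb]; ring
  -- derivative
  have hderiv : ∀ x : ℝ, HasDerivAt gtil
      (4 * (x - xt) ^ 3 + 12 * xt * (x - xt) ^ 2 + K * (x - xt) + d) x := by
    intro x
    rw [hF]
    have h1 : HasDerivAt (fun x : ℝ => x - xt) 1 x := (hasDerivAt_id x).sub_const xt
    have := (((h1.pow 4).add ((h1.pow 3).const_mul (4 * xt))).add
        ((h1.pow 2).const_mul (K / 2))).add (h1.const_mul d)
    exact this.congr_deriv (by norm_num; ring)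
  have hcont : Continuous gtil := by rw [hF]; continuity
  have hmono : StrictMono (deriv gtil) := by
    intro u v huv
    rw [(hderiv u).deriv, (hderiv v).deriv]
    have h2 : (0:ℝ) < (u - v) ^ 2 := by
      have : u - v ≠ 0 := sub_ne_zero.2 huv.ne
      positivity
    have hB : 0 < 4 * ((u-xt)^2 + (u-xt)*(v-xt) + (v-xt)^2) + 12*xt*((u-xt)+(v-xt)) + K := by
      have heq : 4 * ((u-xt)^2 + (u-xt)*(v-xt) + (v-xt)^2) + 12*xt*((u-xt)+(v-xt)) + K
          = 3*(u+v)^2 + (u-v)^2 + (K - 12*xt^2) := by ring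
      rw [heq]
      have := sq_nonneg (u+v)
      linarith
    have hprod := mul_pos (sub_pos.2 huv) hB
    have heq2 : (4 * (v - xt) ^ 3 + 12 * xt * (v - xt) ^ 2 + K * (v - xt) + d)
        - (4 * (u - xt) ^ 3 + 12 * xt * (u - xt) ^ 2 + K * (u - xt) + d)
        = (v - u) * (4 * ((u-xt)^2 + (u-xt)*(v-xt) + (v-xt)^2) + 12*xt*((u-xt)+(v-xt)) + K) := by
      ring
    linarith
  have hconv : StrictConvexOn ℝ (Set.Ici (0:ℝ)) gtil :=
    (hmono.strictConvexOn_univ_of_deriv hcont).subset (Set.subset_univ _) (convex_Ici 0)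
  -- coercivity bound
  obtain ⟨R, hRbig⟩ : ∃ R : ℝ, ∀ x : ℝ, R ≤ x → gtil 0 ≤ gtil x := by
    refine ⟨xt + 1 + 4 * |xt| + |K| / 2 + |d| + |gtil 0|, fun x hx => ?_⟩
    have h5 : gtil x = (x - xt) ^ 4 + 4 * xt * (x - xt) ^ 3
        + (K / 2) * (x - xt) ^ 2 + d * (x - xt) := by rw [hF]
    rw [h5]
    exact coercive_aux |xt| |K| |d| |gtil 0| (x - xt) xt K d (gtil 0)
      (abs_nonneg _) (abs_nonneg _) (abs_nonneg _) (by linarith)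
      (neg_abs_le _) (neg_abs_le _) (neg_abs_le _) (le_abs_self _) (abs_nonneg _)
  have hR0def : max R 0 = max R 0 := rfl
  set R0 : ℝ := max R 0 with hR0def2
  have h0mem : (0:ℝ) ∈ Set.Icc (0:ℝ) R0 := ⟨le_refl _, le_max_right _ _⟩
  obtain ⟨xs, hxs, hminIcc⟩ := (isCompact_Icc (a := (0:ℝ)) (b := R0)).exists_isMinOn
    ⟨0, h0mem⟩ hcont.continuousOn
  have hmin : IsMinOn gtil (Set.Ici 0) xs := by
    intro x hx
    rcases le_or_gt x R0 with hxle | hxgt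
    · exact hminIcc ⟨hx, hxle⟩
    · calc gtil xs ≤ gtil 0 := hminIcc h0mem
        _ ≤ gtil x := hRbig x (le_trans (le_max_left _ _) hxgt.le)
  refine ⟨xs, ⟨hxs.1, fun x hx => hmin hx⟩, ?_⟩
  intro y hy
  have hymin : IsMinOn gtil (Set.Ici 0) y := fun x hx => hy.2 x hx
  exact hconv.eq_of_isMinOn hymin hmin hy.1 hxs.1
end

section
/- Suppose c ≤ b²/(3a) (equivalently, c ≤ 12x̃²). Then the unique minimizer of g̃ over { x : x ≥ 0 } is x* = max( ∛(b³/(27a³) − d/a) + x̃ − b/(3a), 0 ) = max( ∛(x̃³ − d/4), 0 ), where ∛ denotes the real cube root. -/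
/-- The real cube root: the unique real `y` with `y ^ 3 = x`. -/
noncomputable def cbrt (x : ℝ) : ℝ :=
  if 0 ≤ x then x ^ ((1 : ℝ) / 3) else -((-x) ^ ((1 : ℝ) / 3))

lemma cbrt_cube (x : ℝ) : cbrt x ^ 3 = x := by
  unfold cbrt
  split_ifs with h
  · rw [← Real.rpow_natCast (x ^ ((1 : ℝ) / 3)) 3, ← Real.rpow_mul h]
    norm_num
  · push_neg at h
    have h' : (0:ℝ) ≤ -x := by linarith
    have h3 : ((-x) ^ ((1 : ℝ) / 3)) ^ (3:ℕ) = -x := by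
      rw [← Real.rpow_natCast ((-x) ^ ((1 : ℝ) / 3)) 3, ← Real.rpow_mul h']
      norm_num
    rw [Odd.neg_pow ⟨1, by norm_num⟩, h3]
    ring

lemma cbrt_pos {x : ℝ} (h : 0 < x) : 0 < cbrt x := by
  unfold cbrt; rw [if_pos h.le]; exact Real.rpow_pos_of_pos h _

lemma cbrt_nonpos {x : ℝ} (h : x ≤ 0) : cbrt x ≤ 0 := by
  unfold cbrt
  split_ifs with h'
  · have : x = 0 := le_antisymm h h'
    simp [this, Real.zero_rpow (by norm_num : (1:ℝ)/3 ≠ 0)]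
  · exact neg_nonpos.mpr (Real.rpow_nonneg (by linarith) _)

/-- if `c ≤ b²/(3a)`, the unique minimizer of `g̃` over `{x : x ≥ 0}` is
`x* = max(∛(b³/(27a³) − d/a) + x̃ − b/(3a), 0) = max(∛(x̃³ − d/4), 0)`. -/
theorem stmt_3 (xt c d : ℝ) (a b : ℝ) (ha : a = 4) (hb : b = 12 * xt)
    (g : ℝ → ℝ)
    (hg : ∀ x, g x = (a / 4) * (x - xt) ^ 4 + (b / 3) * (x - xt) ^ 3
      + (c / 2) * (x - xt) ^ 2 + d * (x - xt))
    (ctil : ℝ) (hctil : ctil = max (b ^ 2 / (3 * a) - c) 0)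
    (gtil : ℝ → ℝ) (hgtil : ∀ x, gtil x = g x + (ctil / 2) * (x - xt) ^ 2)
    (hc : c ≤ b ^ 2 / (3 * a))
    (xstar : ℝ)
    (hxstar : xstar = max (cbrt (b ^ 3 / (27 * a ^ 3) - d / a) + xt - b / (3 * a)) 0) :
    xstar = max (cbrt (xt ^ 3 - d / 4)) 0 ∧
    0 ≤ xstar ∧ (∀ x : ℝ, 0 ≤ x → gtil xstar ≤ gtil x) ∧
    (∀ z : ℝ, 0 ≤ z → (∀ x : ℝ, 0 ≤ x → gtil z ≤ gtil x) → z = xstar) := by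
  have hct : ctil = b ^ 2 / (3 * a) - c := by
    rw [hctil, max_eq_left (by linarith)]
  subst ha hb
  set k : ℝ := xt ^ 3 - d / 4 with hkdef
  have hxs : xstar = max (cbrt k) 0 := by
    rw [hxstar]
    have e1 : (12 * xt) ^ 3 / (27 * (4:ℝ) ^ 3) - d / 4 = k := by rw [hkdef]; ring
    rw [e1]
    congr 1
    ring
  have hG : ∀ x, gtil x = x ^ 4 - 4 * k * (x - xt) - xt ^ 4 := by
    intro x
    rw [hgtil, hg, hct, hkdef]
    ring
  set s : ℝ := cbrt k with hsdef
  have hs3 : s ^ 3 = k := cbrt_cube k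
  have key : ∀ x, 0 ≤ x → x ≠ xstar → gtil xstar < gtil x := by
    intro x hx hne
    rcases lt_or_ge 0 k with hk | hk
    · have hs : 0 < s := cbrt_pos hk
      have hmax : xstar = s := by rw [hxs, max_eq_left hs.le]
      rw [hmax] at hne ⊢
      rw [hG, hG]
      have hxns : x ≠ s := hne
      nlinarith [sq_nonneg (x - s), sq_nonneg (x + s), sq_nonneg s,
        sq_abs (x - s), abs_pos.mpr (sub_ne_zero.mpr hxns),
        mul_pos (mul_pos (abs_pos.mpr (sub_ne_zero.mpr hxns)) (abs_pos.mpr (sub_ne_zero.mpr hxns))) hs]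
    · have hs : s ≤ 0 := cbrt_nonpos hk
      have hmax : xstar = 0 := by rw [hxs, max_eq_right hs]
      rw [hmax] at hne ⊢
      have hxpos : 0 < x := lt_of_le_of_ne hx (Ne.symm hne)
      rw [hG, hG]
      nlinarith [pow_pos hxpos 4, mul_nonneg (neg_nonneg.mpr hk) hxpos.le]
  have hxsnn : 0 ≤ xstar := by rw [hxs]; exact le_max_right _ _
  refine ⟨hxs, hxsnn, ?_, ?_⟩
  · intro x hx
    by_cases hne : x = xstar
    · rw [hne]
    · exact (key x hx hne).le
  · intro z hz hmin
    by_contra hne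
    have h1 := key z hz hne
    have h2 := hmin xstar hxsnn
    linarith
end

section
/- Suppose c > b²/(3a) (equivalently, c > 12x̃²). Define p = (3ac − b²)/(3a²), q = (9abc − 27a²d − 2b³)/(27a³), and Δ = q²/4 + p³/27. Then Δ > 0, and the unique minimizer of g̃ over { x : x ≥ 0 } is x* = max(w, 0), where w = ∛(q/2 − √Δ) + ∛(q/2 + √Δ) and ∛ denotes the real cube root. -/
lemma rpow_third_cube {x : ℝ} (hx : 0 ≤ x) : (x ^ ((1 : ℝ) / 3)) ^ 3 = x := by
  rw [← Real.rpow_natCast (x ^ ((1 : ℝ) / 3)) 3, ← Real.rpow_mul hx]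
  norm_num

set_option maxHeartbeats 1000000 in
/-- if `c > b²/(3a)` then `Δ > 0` and the unique minimizer of `g̃` over
`{x : x ≥ 0}` is `max(w, 0)` with `w = ∛(q/2 − √Δ) + ∛(q/2 + √Δ)`. -/
theorem stmt_4 (xt c d : ℝ) (a b : ℝ) (ha : a = 4) (hb : b = 12 * xt)
    (g : ℝ → ℝ)
    (hg : ∀ x, g x = (a / 4) * (x - xt) ^ 4 + (b / 3) * (x - xt) ^ 3
      + (c / 2) * (x - xt) ^ 2 + d * (x - xt))
    (ctil : ℝ) (hctil : ctil = max (b ^ 2 / (3 * a) - c) 0)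
    (gtil : ℝ → ℝ) (hgtil : ∀ x, gtil x = g x + (ctil / 2) * (x - xt) ^ 2)
    (hc : b ^ 2 / (3 * a) < c)
    (p q Δ : ℝ)
    (hp : p = (3 * a * c - b ^ 2) / (3 * a ^ 2))
    (hq : q = (9 * a * b * c - 27 * a ^ 2 * d - 2 * b ^ 3) / (27 * a ^ 3))
    (hΔ : Δ = q ^ 2 / 4 + p ^ 3 / 27)
    (w : ℝ) (hw : w = cbrt (q / 2 - Real.sqrt Δ) + cbrt (q / 2 + Real.sqrt Δ)) :
    0 < Δ ∧
    0 ≤ max w 0 ∧ (∀ x : ℝ, 0 ≤ x → gtil (max w 0) ≤ gtil x) ∧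
    (∀ z : ℝ, 0 ≤ z → (∀ x : ℝ, 0 ≤ x → gtil z ≤ gtil x) → z = max w 0) := by
  subst ha hb
  -- p is positive
  have hp0 : 0 < p := by
    rw [hp]; rw [div_lt_iff₀ (by norm_num : (0:ℝ) < 3 * 4)] at hc
    nlinarith
  have hp3 : 0 < p ^ 3 := pow_pos hp0 3
  -- Δ is positive
  have hΔ0 : 0 < Δ := by rw [hΔ]; nlinarith [sq_nonneg q]
  have hΔq : q ^ 2 / 4 < Δ := by rw [hΔ]; nlinarith
  have hs : Real.sqrt Δ ^ 2 = Δ := Real.sq_sqrt hΔ0.le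
  have hs0 : 0 ≤ Real.sqrt Δ := Real.sqrt_nonneg Δ
  have hA : q / 2 - Real.sqrt Δ < 0 := by nlinarith [sq_nonneg (2 * Real.sqrt Δ + q)]
  have hB : 0 < q / 2 + Real.sqrt Δ := by nlinarith [sq_nonneg (2 * Real.sqrt Δ - q)]
  have hαb : (0:ℝ) ≤ Real.sqrt Δ - q / 2 := by linarith
  -- the cube roots
  set α : ℝ := (Real.sqrt Δ - q / 2) ^ ((1:ℝ)/3) with hαdef
  set β : ℝ := (q / 2 + Real.sqrt Δ) ^ ((1:ℝ)/3) with hβdef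
  have hwαβ : w = -α + β := by
    rw [hw, cbrt, cbrt, if_neg (not_le.mpr hA), if_pos hB.le]
    have h1 : -(q / 2 - Real.sqrt Δ) = Real.sqrt Δ - q / 2 := by ring
    rw [h1]
  have hα3 : α ^ 3 = Real.sqrt Δ - q / 2 := rpow_third_cube hαb
  have hβ3 : β ^ 3 = q / 2 + Real.sqrt Δ := rpow_third_cube hB.le
  have hαβ : α * β = p / 3 := by
    rw [hαdef, hβdef, ← Real.mul_rpow hαb hB.le]
    have h1 : (Real.sqrt Δ - q / 2) * (q / 2 + Real.sqrt Δ) = (p / 3) ^ 3 := by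
      have h2 : (Real.sqrt Δ - q / 2) * (q / 2 + Real.sqrt Δ) = Δ - q ^ 2 / 4 := by
        linear_combination hs
      rw [h2, hΔ]; ring
    rw [h1, ← Real.rpow_natCast (p / 3) 3, ← Real.rpow_mul (by positivity)]
    norm_num
  -- w is the root of the depressed cubic
  have hw3 : w ^ 3 = q - p * w := by
    rw [hwαβ]
    linear_combination hβ3 - hα3 - 3 * (β - α) * hαβ
  -- ctil = 0
  have hc0 : ctil = 0 := by
    rw [hctil]; exact max_eq_right (by linarith)
  -- the key polynomial identity
  have key : ∀ x y : ℝ, gtil x - gtil y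
      = (x ^ 4 - y ^ 4) + 2 * p * (x ^ 2 - y ^ 2) - 4 * q * (x - y) := by
    intro x y
    rw [hgtil, hgtil, hg, hg, hc0, hp, hq]
    ring
  -- factored form around w
  have hfacw : ∀ x : ℝ, gtil x - gtil w
      = (x - w) ^ 2 * ((x + w) ^ 2 + 2 * w ^ 2 + 2 * p) := by
    intro x
    rw [key x w]
    linear_combination (4 * (x - w)) * hw3
  have hmin0 : ∀ x : ℝ, 0 ≤ x → gtil (max w 0) ≤ gtil x := by
    intro x hx
    by_cases hw0 : 0 ≤ w
    · rw [max_eq_left hw0]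
      have h1 := hfacw x
      have h2 : 0 ≤ (x - w) ^ 2 * ((x + w) ^ 2 + 2 * w ^ 2 + 2 * p) :=
        mul_nonneg (sq_nonneg _) (by nlinarith [sq_nonneg (x + w), sq_nonneg w])
      linarith
    · push_neg at hw0
      rw [max_eq_right hw0.le]
      have hw' : (0:ℝ) < -w := by linarith
      have hc3 : w ^ 3 < 0 := by nlinarith [mul_pos (mul_pos hw' hw') hw']
      have hc4 : p * w < 0 := mul_neg_of_pos_of_neg hp0 hw0
      have hq0 : q < 0 := by linarith [hw3]
      have h1 := key x 0
      have h2 : 0 ≤ gtil x - gtil 0 := by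
        rw [h1]
        nlinarith [pow_nonneg hx 4, mul_nonneg hp0.le (sq_nonneg x),
          mul_nonneg (neg_nonneg.mpr hq0.le) hx]
      linarith
  refine ⟨hΔ0, le_max_right _ _, hmin0, ?_⟩
  intro z hz hzmin
  have he : gtil z = gtil (max w 0) :=
    le_antisymm (hzmin _ (le_max_right w 0)) (hmin0 z hz)
  by_cases hw0 : 0 ≤ w
  · rw [max_eq_left hw0] at he ⊢
    have h1 := hfacw z
    have hP : 0 < (z + w) ^ 2 + 2 * w ^ 2 + 2 * p := by
      nlinarith [sq_nonneg (z + w), sq_nonneg w]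
    have h2 : (z - w) ^ 2 * ((z + w) ^ 2 + 2 * w ^ 2 + 2 * p) = 0 := by linarith
    have h3 : (z - w) ^ 2 = 0 := by
      rcases mul_eq_zero.mp h2 with h | h
      · exact h
      · exact absurd h hP.ne'
    have h4 : z - w = 0 := by
      exact pow_eq_zero_iff (by norm_num) |>.mp h3
    linarith
  · push_neg at hw0
    rw [max_eq_right hw0.le] at he ⊢
    have hw' : (0:ℝ) < -w := by linarith
    have hc3 : w ^ 3 < 0 := by nlinarith [mul_pos (mul_pos hw' hw') hw']
    have hc4 : p * w < 0 := mul_neg_of_pos_of_neg hp0 hw0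
    have hq0 : q < 0 := by linarith [hw3]
    have h1 := key z 0
    have hz2 : z ^ 2 ≤ 0 := by
      nlinarith [pow_nonneg hz 4, mul_nonneg (neg_nonneg.mpr hq0.le) hz]
    have : z ^ 2 = 0 := le_antisymm hz2 (sq_nonneg z)
    exact pow_eq_zero_iff (by norm_num) |>.mp this
end

section
/- Let M ∈ ℝ^{n×n} be symmetric, let X̃ ∈ ℝ^{n×r}, fix indices i ∈ {1,…,n} and j ∈ {1,…,r}, and let x ∈ ℝ. Let X = X̃ + (x − X̃_{ij}) E_{ij}, where E_{ij} ∈ ℝ^{n×r} has a 1 in entry (i,j) and 0 elsewhere. Then ‖M − XXᵀ‖² = ‖M − X̃X̃ᵀ‖² + (x − X̃_{ij})⁴ + 4 X̃_{ij} (x − X̃_{ij})³ + 2( (X̃X̃ᵀ)_{ii} − M_{ii} + (X̃ᵀX̃)_{jj} + X̃_{ij}² ) (x − X̃_{ij})² + 4 ( (X̃X̃ᵀ − M) X̃ )_{ij} (x − X̃_{ij}). -/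
open Matrix Finset

attribute [local instance] Matrix.frobeniusNormedAddCommGroup Matrix.frobeniusNormedSpace

private lemma frob_sq {n m : ℕ} (A : Matrix (Fin n) (Fin m) ℝ) :
    ‖A‖ ^ 2 = ∑ k, ∑ l, (A k l) ^ 2 := by
  rw [Matrix.frobenius_norm_def]
  rw [← Real.rpow_natCast _ 2, ← Real.rpow_mul (by positivity)]
  norm_num

/-- single-entry update identity for the SNMF objective.  With
`X = X̃ + (x − X̃ᵢⱼ) Eᵢⱼ`,
`‖M − XXᵀ‖² = ‖M − X̃X̃ᵀ‖² + (x − X̃ᵢⱼ)⁴ + 4X̃ᵢⱼ(x − X̃ᵢⱼ)³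
  + 2((X̃X̃ᵀ)ᵢᵢ − Mᵢᵢ + (X̃ᵀX̃)ⱼⱼ + X̃ᵢⱼ²)(x − X̃ᵢⱼ)² + 4((X̃X̃ᵀ − M)X̃)ᵢⱼ(x − X̃ᵢⱼ)`,
where `‖·‖` is the Frobenius norm. -/

theorem stmt_6 {n r : ℕ} (M : Matrix (Fin n) (Fin n) ℝ) (hM : M.IsSymm)
    (Xt : Matrix (Fin n) (Fin r) ℝ) (i : Fin n) (j : Fin r) (x : ℝ)
    (X : Matrix (Fin n) (Fin r) ℝ)
    (hX : X = Xt + (x - Xt i j) • Matrix.single i j (1 : ℝ)) :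
    ‖M - X * Xᵀ‖ ^ 2 =
      ‖M - Xt * Xtᵀ‖ ^ 2 + (x - Xt i j) ^ 4 + 4 * Xt i j * (x - Xt i j) ^ 3
        + 2 * ((Xt * Xtᵀ) i i - M i i + (Xtᵀ * Xt) j j + (Xt i j) ^ 2) * (x - Xt i j) ^ 2
        + 4 * ((Xt * Xtᵀ - M) * Xt) i j * (x - Xt i j) := by
  set t := x - Xt i j with ht
  set A := M - Xt * Xtᵀ with hA
  have hAsymm : ∀ k l, A l k = A k l := by
    intro k l
    simp only [hA, Matrix.sub_apply, Matrix.mul_apply, Matrix.transpose_apply]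
    rw [hM.apply k l]
    congr 1
    exact Finset.sum_congr rfl fun m _ => mul_comm _ _
  have key : ∀ k l, (M - X * Xᵀ) k l
      = A k l - (t * ((if k = i then Xt l j else 0) + (if l = i then Xt k j else 0))
          + t^2 * (if k = i then (if l = i then 1 else 0) else 0)) := by
    intro k l
    rw [hX]
    by_cases hk : k = i <;> by_cases hl : l = i <;>
      simp [hk, hl, fun h : ¬ k = i => (Ne.symm h : i ≠ k), fun h : ¬ l = i => (Ne.symm h : i ≠ l),
        hA, Matrix.mul_apply, Matrix.sub_apply, Matrix.add_apply, Matrix.transpose_apply,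
        Matrix.smul_apply, Matrix.single, Matrix.of_apply, mul_ite, ite_mul,
        Finset.sum_add_distrib, Finset.sum_ite_eq', mul_add, add_mul] <;> ring
  have expand : ∀ k l, ((M - X * Xᵀ) k l)^2
      = A k l^2
        + (if k = i then t^2 * Xt l j^2 - 2*t*(A i l * Xt l j) else 0)
        + (if l = i then t^2 * Xt k j^2 - 2*t*(A k i * Xt k j) else 0)
        + (if k = i then (if l = i then t^4 + 4*t^3*Xt i j + 2*t^2*Xt i j^2 - 2*t^2*A i i else 0) else 0) := by
    intro k l
    rw [key k l]
    by_cases hk : k = i <;> by_cases hl : l = i <;> simp [hk, hl] <;> ring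
  rw [frob_sq, frob_sq]
  simp only [expand, Finset.sum_add_distrib]
  have hP : ∑ k : Fin n, ∑ l : Fin n,
      (if k = i then t^2 * Xt l j^2 - 2*t*(A i l * Xt l j) else 0)
      = ∑ l : Fin n, (t^2 * Xt l j^2 - 2*t*(A i l * Xt l j)) := by
    rw [Finset.sum_comm]
    simp [Finset.sum_ite_eq']
  have hQ : ∑ k : Fin n, ∑ l : Fin n,
      (if l = i then t^2 * Xt k j^2 - 2*t*(A k i * Xt k j) else 0)
      = ∑ k : Fin n, (t^2 * Xt k j^2 - 2*t*(A k i * Xt k j)) := by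
    simp [Finset.sum_ite_eq']
  have hR : ∑ k : Fin n, ∑ l : Fin n,
      (if k = i then (if l = i then t^4 + 4*t^3*Xt i j + 2*t^2*Xt i j^2 - 2*t^2*A i i else 0) else 0)
      = t^4 + 4*t^3*Xt i j + 2*t^2*Xt i j^2 - 2*t^2*A i i := by
    simp [Finset.sum_ite_eq']
  rw [hP, hQ, hR]
  have h1 : ∑ l : Fin n, (t^2 * Xt l j^2 - 2*t*(A i l * Xt l j))
      = t^2 * (Xtᵀ * Xt) j j + 2*t*((Xt * Xtᵀ - M) * Xt) i j := by
    have e : ∀ l : Fin n, t^2 * Xt l j^2 - 2*t*(A i l * Xt l j)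
        = t^2 * (Xt l j * Xt l j) + 2*t*(((Xt*Xtᵀ) i l - M i l) * Xt l j) := by
      intro l
      simp only [hA, Matrix.sub_apply]
      ring
    rw [Finset.sum_congr rfl fun l _ => e l, Finset.sum_add_distrib,
      ← Finset.mul_sum, ← Finset.mul_sum]
    have g1 : ∑ l : Fin n, (Xt l j * Xt l j) = (Xtᵀ * Xt) j j := by
      simp [Matrix.mul_apply]
    have g2 : ∑ l : Fin n, ((Xt*Xtᵀ) i l - M i l) * Xt l j = ((Xt * Xtᵀ - M) * Xt) i j := by
      simp [Matrix.mul_apply, Matrix.sub_apply]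
    rw [g1, g2]
  have h2 : ∑ k : Fin n, (t^2 * Xt k j^2 - 2*t*(A k i * Xt k j))
      = t^2 * (Xtᵀ * Xt) j j + 2*t*((Xt * Xtᵀ - M) * Xt) i j := by
    rw [← h1]
    refine Finset.sum_congr rfl fun k _ => ?_
    rw [hAsymm k i]
  rw [h1, h2, hA]
  simp only [Matrix.sub_apply]
  ring
end

section
/- Let M ∈ ℝ^{n×n} be symmetric, let X̃ ∈ ℝ^{n×r}, and fix a row index i ∈ {1,…,n}. For x ∈ ℝʳ let X(x) denote the matrix X̃ with its i-th row replaced by xᵀ. Define P_i = Σ_{k ≠ i} X̃_{k:}ᵀ X̃_{k:} (where X̃_{k:} is the k-th row of X̃ viewed as a row vector), Q_i = P_i − M_{ii} I, and q_i = Σ_{k ≠ i} M_{ki} X̃_{k:}ᵀ. Then there exists a constant C, independent of x, such that for all x ∈ ℝʳ: ‖M − X(x)X(x)ᵀ‖² = ‖x‖⁴ + 2 xᵀ Q_i x − 4 q_iᵀ x + C. -/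
open Matrix

attribute [local instance] Matrix.frobeniusNormedAddCommGroup Matrix.frobeniusNormedSpace

/-- row update identity for the SNMF objective.  With `X(x)` equal to `X̃`
with its `i`-th row replaced by `xᵀ`, `Pᵢ = Σ_{k ≠ i} X̃ₖ₍ᵀX̃ₖ₎`, `Qᵢ = Pᵢ − Mᵢᵢ I`,
`qᵢ = Σ_{k ≠ i} Mₖᵢ X̃ₖᵀ`, there exists a constant `C` (independent of `x`) with
`‖M − X(x)X(x)ᵀ‖² = ‖x‖⁴ + 2xᵀQᵢx − 4qᵢᵀx + C` for all `x ∈ ℝʳ`.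
Here `‖M − ⋯‖` is the Frobenius norm and `(Σₐ xₐ²)` is the squared Euclidean norm of `x`. -/
theorem stmt_7 {n r : ℕ} (M : Matrix (Fin n) (Fin n) ℝ) (hM : M.IsSymm)
    (Xt : Matrix (Fin n) (Fin r) ℝ) (i : Fin n)
    (P Q : Matrix (Fin r) (Fin r) ℝ) (q : Fin r → ℝ)
    (hP : ∀ a b, P a b = ∑ k ∈ Finset.univ.erase i, Xt k a * Xt k b)
    (hQ : Q = P - M i i • (1 : Matrix (Fin r) (Fin r) ℝ))
    (hq : ∀ a, q a = ∑ k ∈ Finset.univ.erase i, M k i * Xt k a) :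
    ∃ C : ℝ, ∀ x : Fin r → ℝ,
      ‖M - (Xt.updateRow i x) * (Xt.updateRow i x)ᵀ‖ ^ 2 =
        (∑ a, (x a) ^ 2) ^ 2 + 2 * (x ⬝ᵥ Q.mulVec x) - 4 * (q ⬝ᵥ x) + C := by
  classical
  set S := Finset.univ.erase i with hS
  refine ⟨(∑ k ∈ S, ∑ l ∈ S, (M k l - ∑ a, Xt k a * Xt l a)^2)
      + 2 * ∑ k ∈ S, (M k i)^2 + (M i i)^2, ?_⟩
  intro x
  have frob : ∀ (A : Matrix (Fin n) (Fin n) ℝ), ‖A‖ ^ 2 = ∑ k, ∑ l, (A k l)^2 := by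
    intro A
    have h0 : (0:ℝ) ≤ ∑ k, ∑ l, (A k l)^2 :=
      Finset.sum_nonneg fun _ _ => Finset.sum_nonneg fun _ _ => sq_nonneg _
    rw [Matrix.frobenius_norm_def]
    have he : ∀ k l, ‖A k l‖ ^ (2:ℝ) = (A k l)^2 := by
      intro k l
      rw [show (2:ℝ) = ((2:ℕ):ℝ) by norm_num, Real.rpow_natCast, Real.norm_eq_abs, sq_abs]
    simp_rw [he]
    rw [← Real.rpow_natCast (_ ^ (_ : ℝ)) 2, ← Real.rpow_mul h0]
    norm_num
  rw [frob]
  set X := Xt.updateRow i x with hX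
  have hXi : ∀ a, X i a = x a := fun a => by simp [hX]
  have hXk : ∀ k, k ≠ i → ∀ a, X k a = Xt k a := fun k hk a => by
    simp [hX, Matrix.updateRow_ne hk]
  have split : ∀ F : Fin n → ℝ, ∑ k, F k = (∑ k ∈ S, F k) + F i :=
    fun F => (Finset.sum_erase_add _ _ (Finset.mem_univ i)).symm
  have entry : ∀ k l, (M - X * Xᵀ) k l = M k l - ∑ a, X k a * X l a := by
    intro k l; simp [Matrix.mul_apply, Matrix.sub_apply]
  simp_rw [entry]
  simp_rw [split]
  -- abbreviations
  set d : Fin n → ℝ := fun k => ∑ a, Xt k a * x a with hd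
  -- rewrite the three variable blocks
  have e1 : ∑ k ∈ S, (∑ l ∈ S, (M k l - ∑ a, X k a * X l a) ^ 2
        + (M k i - ∑ a, X k a * X i a) ^ 2)
      = (∑ k ∈ S, ∑ l ∈ S, (M k l - ∑ a, Xt k a * Xt l a)^2)
        + ∑ k ∈ S, (M k i - d k)^2 := by
    rw [← Finset.sum_add_distrib]
    refine Finset.sum_congr rfl fun k hk => ?_
    have hk' : k ≠ i := Finset.ne_of_mem_erase hk
    congr 1
    · refine Finset.sum_congr rfl fun l hl => ?_
      have hl' : l ≠ i := Finset.ne_of_mem_erase hl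
      simp_rw [hXk k hk', hXk l hl']
    · simp_rw [hXk k hk', hXi]; rfl
  have e2 : ∑ l ∈ S, (M i l - ∑ a, X i a * X l a) ^ 2 = ∑ l ∈ S, (M l i - d l)^2 := by
    refine Finset.sum_congr rfl fun l hl => ?_
    have hl' : l ≠ i := Finset.ne_of_mem_erase hl
    have hMs : M i l = M l i := by
      conv_lhs => rw [← hM]
      rfl
    simp_rw [hXi, hXk l hl', hMs, hd, mul_comm (x _)]
  have e3 : ∑ a, X i a * X i a = ∑ a, (x a)^2 := by
    simp_rw [hXi, sq]
  rw [e1, e2, e3]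
  -- scalar identities
  have hd2 : ∑ k ∈ S, (d k)^2 = x ⬝ᵥ P.mulVec x := by
    simp_rw [dotProduct, Matrix.mulVec, dotProduct, hP, Finset.sum_mul, Finset.mul_sum,
      hd, sq, Finset.sum_mul_sum]
    rw [Finset.sum_comm]
    refine Finset.sum_congr rfl fun a _ => ?_
    rw [Finset.sum_comm]
    exact Finset.sum_congr rfl fun k _ => Finset.sum_congr rfl fun b _ => by ring
  have hqx : q ⬝ᵥ x = ∑ k ∈ S, M k i * d k := by
    simp_rw [dotProduct, hq, Finset.sum_mul, hd, Finset.mul_sum]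
    rw [Finset.sum_comm]
    exact Finset.sum_congr rfl fun k _ => Finset.sum_congr rfl fun a _ => by ring
  have hQx : x ⬝ᵥ Q.mulVec x = x ⬝ᵥ P.mulVec x - M i i * ∑ a, (x a)^2 := by
    subst hQ
    rw [Matrix.sub_mulVec, dotProduct_sub]
    congr 1
    rw [Matrix.smul_mulVec, Matrix.one_mulVec, dotProduct_smul, smul_eq_mul]
    simp_rw [dotProduct, sq]
  have hexp : ∑ k ∈ S, (M k i - d k)^2
      = ∑ k ∈ S, (M k i)^2 - 2 * (∑ k ∈ S, M k i * d k) + ∑ k ∈ S, (d k)^2 := by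
    simp_rw [sub_sq]
    rw [Finset.sum_add_distrib, Finset.sum_sub_distrib, Finset.mul_sum]
    ring_nf
  rw [hexp, hd2, hqx, hQx]
  ring
end

section
/- Let S ≥ 0 be a real number and b ∈ ℝʳ. A point x ≥ 0 minimizes h_b(x) = ‖x‖⁴ + 2S‖x‖² − 4bᵀx over the nonnegative orthant {x ∈ ℝʳ : x ≥ 0} if and only if it minimizes h_{[b]₊}(x) = ‖x‖⁴ + 2S‖x‖² − 4[b]₊ᵀx over the nonnegative orthant; in particular both problems have the same optimal value, and every common minimizer x satisfies x_i = 0 for every index i with b_i < 0. -/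
/-- for `S ≥ 0` and `b ∈ ℝʳ`, a point `x ≥ 0` minimizes
`h_b(x) = ‖x‖⁴ + 2S‖x‖² − 4bᵀx` over the nonnegative orthant iff it minimizes
`h_{[b]₊}(x) = ‖x‖⁴ + 2S‖x‖² − 4[b]₊ᵀx` over the nonnegative orthant; both problems
have the same optimal value, and every common minimizer `x` satisfies `xᵢ = 0`
whenever `bᵢ < 0`. -/
theorem stmt_10 {r : ℕ} (S : ℝ) (hS : 0 ≤ S)
    (b : EuclideanSpace ℝ (Fin r))
    (bp : EuclideanSpace ℝ (Fin r)) (hbp : ∀ i, bp i = max (b i) 0)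
    (hb hp : EuclideanSpace ℝ (Fin r) → ℝ)
    (hhb : ∀ x, hb x = ‖x‖ ^ 4 + 2 * S * ‖x‖ ^ 2 - 4 * ∑ i, b i * x i)
    (hhp : ∀ x, hp x = ‖x‖ ^ 4 + 2 * S * ‖x‖ ^ 2 - 4 * ∑ i, bp i * x i) :
    (∀ x : EuclideanSpace ℝ (Fin r), (∀ i, 0 ≤ x i) →
      ((∀ y : EuclideanSpace ℝ (Fin r), (∀ i, 0 ≤ y i) → hb x ≤ hb y) ↔
        (∀ y : EuclideanSpace ℝ (Fin r), (∀ i, 0 ≤ y i) → hp x ≤ hp y))) ∧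
    sInf (hb '' {x : EuclideanSpace ℝ (Fin r) | ∀ i, 0 ≤ x i}) =
      sInf (hp '' {x : EuclideanSpace ℝ (Fin r) | ∀ i, 0 ≤ x i}) ∧
    (∀ x : EuclideanSpace ℝ (Fin r), (∀ i, 0 ≤ x i) →
      (∀ y : EuclideanSpace ℝ (Fin r), (∀ i, 0 ≤ y i) → hb x ≤ hb y) →
      (∀ y : EuclideanSpace ℝ (Fin r), (∀ i, 0 ≤ y i) → hp x ≤ hp y) →
      ∀ i, b i < 0 → x i = 0) := by
  classical
  -- truncation operator
  set T : EuclideanSpace ℝ (Fin r) → EuclideanSpace ℝ (Fin r) :=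
    fun x => WithLp.toLp 2 (fun i => if 0 ≤ b i then x i else 0) with hT
  have hTnn : ∀ x : EuclideanSpace ℝ (Fin r), (∀ i, 0 ≤ x i) → ∀ i, 0 ≤ T x i := by
    intro x hx i
    simp only [hT]
    split
    · exact hx i
    · exact le_refl 0
  have hnormsq : ∀ x : EuclideanSpace ℝ (Fin r), ‖x‖ ^ 2 = ∑ i, (x i) ^ 2 := by
    intro x
    rw [EuclideanSpace.norm_eq, Real.sq_sqrt (by positivity)]
    simp [sq_abs]
  have hTnormsq_le : ∀ x : EuclideanSpace ℝ (Fin r), ‖T x‖ ^ 2 ≤ ‖x‖ ^ 2 := by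
    intro x
    rw [hnormsq, hnormsq]
    apply Finset.sum_le_sum
    intro i _
    by_cases h : 0 ≤ b i
    · simp [hT, h]
    · simp only [hT, h, if_false]
      simpa using sq_nonneg (x i)
  have hTnorm_le : ∀ x : EuclideanSpace ℝ (Fin r), ‖T x‖ ≤ ‖x‖ := by
    intro x
    nlinarith [hTnormsq_le x, norm_nonneg x, norm_nonneg (T x)]
  have hTnorm_lt : ∀ (x : EuclideanSpace ℝ (Fin r)) (j : Fin r),
      b j < 0 → 0 < x j → ‖T x‖ < ‖x‖ := by
    intro x j hbj hxj
    have hsq : ‖T x‖ ^ 2 < ‖x‖ ^ 2 := by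
      rw [hnormsq, hnormsq]
      apply Finset.sum_lt_sum
      · intro i _
        by_cases h : 0 ≤ b i
        · simp [hT, h]
        · simp only [hT, h, if_false]
          simpa using sq_nonneg (x i)
      · refine ⟨j, Finset.mem_univ j, ?_⟩
        simp only [hT, not_le.2 hbj, if_false]
        simpa using pow_pos hxj 2
    nlinarith [norm_nonneg x, norm_nonneg (T x)]
  have hsum_bp_T : ∀ x : EuclideanSpace ℝ (Fin r),
      ∑ i, bp i * T x i = ∑ i, bp i * x i := by
    intro x
    apply Finset.sum_congr rfl
    intro i _
    by_cases h : 0 ≤ b i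
    · simp [hT, h]
    · have hbpz : bp i = 0 := by
        rw [hbp i]
        exact max_eq_right (le_of_lt (not_le.mp h))
      simp [hT, h, hbpz]
  have hsum_b_T_eq : ∀ x : EuclideanSpace ℝ (Fin r),
      ∑ i, b i * T x i = ∑ i, bp i * T x i := by
    intro x
    apply Finset.sum_congr rfl
    intro i _
    by_cases h : 0 ≤ b i
    · rw [hbp i, max_eq_left h]
    · simp [hT, h]
  have hble : ∀ x : EuclideanSpace ℝ (Fin r), (∀ i, 0 ≤ x i) →
      ∑ i, b i * x i ≤ ∑ i, bp i * x i := by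
    intro x hx
    apply Finset.sum_le_sum
    intro i _
    rw [hbp i]
    exact mul_le_mul_of_nonneg_right (le_max_left _ _) (hx i)
  have hp_le_hb : ∀ x : EuclideanSpace ℝ (Fin r), (∀ i, 0 ≤ x i) → hp x ≤ hb x := by
    intro x hx
    rw [hhp, hhb]
    have := hble x hx
    linarith
  have hpT_le : ∀ x : EuclideanSpace ℝ (Fin r), hp (T x) ≤ hp x := by
    intro x
    rw [hhp, hhp, hsum_bp_T]
    have h1 := hTnorm_le x
    have h2 := norm_nonneg (T x)
    have h4 : ‖T x‖ ^ 4 ≤ ‖x‖ ^ 4 := pow_le_pow_left₀ h2 h1 4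
    have hsq : ‖T x‖ ^ 2 ≤ ‖x‖ ^ 2 := pow_le_pow_left₀ h2 h1 2
    nlinarith
  have hpT_lt : ∀ (x : EuclideanSpace ℝ (Fin r)) (j : Fin r),
      b j < 0 → 0 < x j → hp (T x) < hp x := by
    intro x j hbj hxj
    rw [hhp, hhp, hsum_bp_T]
    have h1 := hTnorm_lt x j hbj hxj
    have h2 := norm_nonneg (T x)
    have h4 : ‖T x‖ ^ 4 < ‖x‖ ^ 4 := by
      exact pow_lt_pow_left₀ h1 h2 (by norm_num)
    have hsq : ‖T x‖ ^ 2 ≤ ‖x‖ ^ 2 := pow_le_pow_left₀ h2 h1.le 2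
    nlinarith
  have hbT_eq_hpT : ∀ x : EuclideanSpace ℝ (Fin r), hb (T x) = hp (T x) := by
    intro x
    rw [hhb, hhp, hsum_b_T_eq]
  have key0 : ∀ x : EuclideanSpace ℝ (Fin r), (∀ i, 0 ≤ x i) →
      (∀ y : EuclideanSpace ℝ (Fin r), (∀ i, 0 ≤ y i) → hp x ≤ hp y) →
      ∀ i, b i < 0 → x i = 0 := by
    intro x hx hmin i hbi
    by_contra h
    have hxi : 0 < x i := lt_of_le_of_ne (hx i) (Ne.symm h)
    have h1 := hmin (T x) (hTnn x hx)
    have h2 := hpT_lt x i hbi hxi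
    linarith
  have hb_eq_hp_of : ∀ x : EuclideanSpace ℝ (Fin r),
      (∀ i, b i < 0 → x i = 0) → hb x = hp x := by
    intro x hx
    rw [hhb, hhp]
    have : ∑ i, b i * x i = ∑ i, bp i * x i := by
      apply Finset.sum_congr rfl
      intro i _
      by_cases h : 0 ≤ b i
      · rw [hbp i, max_eq_left h]
      · rw [hx i (not_le.mp h)]; ring
    rw [this]
  -- lower bound for bddBelow
  have hlow : ∀ (v x : EuclideanSpace ℝ (Fin r)),
      -(2 * ‖v‖ ^ 2 + 1) ≤ ‖x‖ ^ 4 + 2 * S * ‖x‖ ^ 2 - 4 * ∑ i, v i * x i := by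
    intro v x
    have hcs : ∑ i, v i * x i ≤ ‖v‖ * ‖x‖ := by
      have h1 : (inner ℝ v x : ℝ) ≤ ‖v‖ * ‖x‖ := real_inner_le_norm v x
      have h2 : (inner ℝ v x : ℝ) = ∑ i, v i * x i := by
        simp [PiLp.inner_apply, RCLike.inner_apply, mul_comm]
      linarith [h2 ▸ h1]
    nlinarith [sq_nonneg (‖x‖ ^ 2 - 1), sq_nonneg (‖x‖ - ‖v‖), norm_nonneg x,
      mul_nonneg hS (sq_nonneg ‖x‖)]
  have hAne : (hb '' {x : EuclideanSpace ℝ (Fin r) | ∀ i, 0 ≤ x i}).Nonempty :=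
    ⟨hb 0, ⟨0, fun i => le_refl 0, rfl⟩⟩
  have hBne : (hp '' {x : EuclideanSpace ℝ (Fin r) | ∀ i, 0 ≤ x i}).Nonempty :=
    ⟨hp 0, ⟨0, fun i => le_refl 0, rfl⟩⟩
  have hAbd : BddBelow (hb '' {x : EuclideanSpace ℝ (Fin r) | ∀ i, 0 ≤ x i}) := by
    refine ⟨-(2 * ‖b‖ ^ 2 + 1), ?_⟩
    rintro v ⟨x, hx, rfl⟩
    rw [hhb]
    exact hlow b x
  have hBbd : BddBelow (hp '' {x : EuclideanSpace ℝ (Fin r) | ∀ i, 0 ≤ x i}) := by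
    refine ⟨-(2 * ‖bp‖ ^ 2 + 1), ?_⟩
    rintro v ⟨x, hx, rfl⟩
    rw [hhp]
    exact hlow bp x
  refine ⟨?_, ?_, ?_⟩
  · intro x hx
    constructor
    · intro hmin y hy
      calc hp x ≤ hb x := hp_le_hb x hx
        _ ≤ hb (T y) := hmin (T y) (hTnn y hy)
        _ = hp (T y) := hbT_eq_hpT y
        _ ≤ hp y := hpT_le y
    · intro hmin y hy
      have hz := key0 x hx hmin
      have he := hb_eq_hp_of x hz
      calc hb x = hp x := he
        _ ≤ hp y := hmin y hy
        _ ≤ hb y := hp_le_hb y hy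
  · apply le_antisymm
    · apply le_csInf hBne
      rintro v ⟨x, hx, rfl⟩
      have hmem : hb (T x) ∈ hb '' {x : EuclideanSpace ℝ (Fin r) | ∀ i, 0 ≤ x i} :=
        ⟨T x, hTnn x hx, rfl⟩
      calc sInf (hb '' {x : EuclideanSpace ℝ (Fin r) | ∀ i, 0 ≤ x i})
          ≤ hb (T x) := csInf_le hAbd hmem
        _ = hp (T x) := hbT_eq_hpT x
        _ ≤ hp x := hpT_le x
    · apply le_csInf hAne
      rintro v ⟨x, hx, rfl⟩
      calc sInf (hp '' {x : EuclideanSpace ℝ (Fin r) | ∀ i, 0 ≤ x i})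
          ≤ hp x := csInf_le hBbd ⟨x, hx, rfl⟩
        _ ≤ hb x := hp_le_hb x hx
  · intro x hx _ hminp
    exact key0 x hx hminp
end

section
/- Let X = X₁ × ⋯ × X_m where each X_i ⊆ ℝ^{n_i} is closed and convex, and let f : X → ℝ be continuous. For each i let u_i : X_i × X → ℝ be continuous and satisfy (i) u_i(x_i; x) = f(x) for all x ∈ X, and (ii) u_i(y_i; x) ≥ f(x_{<i}, y_i, x_{>i}) for all y_i ∈ X_i and x ∈ X, where (x_{<i}, y_i, x_{>i}) denotes x with its i-th block component replaced by y_i. Suppose x^{k_j} ∈ X is a sequence converging to x^∞ ∈ X such that, for each i, f(x^{k_j}) − inf_{y_i ∈ X_i} u_i(y_i; x^{k_j}) → 0 as j → ∞. Then for every i, u_i(x_i^∞; x^∞) ≤ u_i(y_i; x^∞) for all y_i ∈ X_i; i.e., x_i^∞ is a global minimizer of u_i(·; x^∞) over X_i. -/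
open Filter

/-- limit points of sequences along which the block upper-bound gaps
vanish are blockwise minimizers of the upper bounds.  The hypothesis
`f(x^{k_j}) − inf_{y ∈ Xᵢ} uᵢ(y; x^{k_j}) → 0` is expressed in ε-form:
for every `ε > 0`, eventually `f(x^{k_j}) ≤ uᵢ(y; x^{k_j}) + ε` for all `y ∈ Xᵢ`. -/
theorem stmt_13 (m : ℕ) (n : Fin m → ℕ)
    (Xi : ∀ i : Fin m, Set (EuclideanSpace ℝ (Fin (n i))))
    (hclosed : ∀ i, IsClosed (Xi i)) (hconv : ∀ i, Convex ℝ (Xi i))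
    (f : (∀ i : Fin m, EuclideanSpace ℝ (Fin (n i))) → ℝ)
    (hf : ContinuousOn f (Set.pi Set.univ Xi))
    (u : ∀ i : Fin m,
      EuclideanSpace ℝ (Fin (n i)) → (∀ j : Fin m, EuclideanSpace ℝ (Fin (n j))) → ℝ)
    (hu_cont : ∀ i, ContinuousOn
      (fun p : EuclideanSpace ℝ (Fin (n i)) × (∀ j : Fin m, EuclideanSpace ℝ (Fin (n j))) =>
        u i p.1 p.2) ((Xi i) ×ˢ (Set.pi Set.univ Xi)))
    (hu_eq : ∀ i, ∀ x ∈ Set.pi Set.univ Xi, u i (x i) x = f x)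
    (hu_ub : ∀ i, ∀ x ∈ Set.pi Set.univ Xi, ∀ y ∈ Xi i,
      u i y x ≥ f (Function.update x i y))
    (xs : ℕ → ∀ i : Fin m, EuclideanSpace ℝ (Fin (n i)))
    (hxs : ∀ k, xs k ∈ Set.pi Set.univ Xi)
    (xinf : ∀ i : Fin m, EuclideanSpace ℝ (Fin (n i)))
    (hxinf : xinf ∈ Set.pi Set.univ Xi)
    (hlim : Tendsto xs atTop (nhds xinf))
    (hgap : ∀ i, ∀ ε : ℝ, 0 < ε →
      ∀ᶠ k in atTop, ∀ y ∈ Xi i, f (xs k) ≤ u i y (xs k) + ε) :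
    ∀ i, ∀ y ∈ Xi i, u i (xinf i) xinf ≤ u i y xinf := by
  intro i y hy
  rw [hu_eq i xinf hxinf]
  have hxsin : Tendsto xs atTop (nhdsWithin xinf (Set.pi Set.univ Xi)) :=
    tendsto_nhdsWithin_of_tendsto_nhds_of_eventually_within xs hlim
      (Eventually.of_forall hxs)
  have hft : Tendsto (fun k => f (xs k)) atTop (nhds (f xinf)) :=
    (hf xinf hxinf).tendsto.comp hxsin
  have hut : Tendsto (fun k => u i y (xs k)) atTop (nhds (u i y xinf)) := by
    have hpt : Tendsto (fun k => ((y, xs k) :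
        EuclideanSpace ℝ (Fin (n i)) × (∀ j : Fin m, EuclideanSpace ℝ (Fin (n j)))))
        atTop (nhdsWithin (y, xinf) ((Xi i) ×ˢ (Set.pi Set.univ Xi))) := by
      refine tendsto_nhdsWithin_of_tendsto_nhds_of_eventually_within _
        (Tendsto.prodMk_nhds tendsto_const_nhds hlim)
        (Eventually.of_forall fun k => ⟨hy, hxs k⟩)
    exact ((hu_cont i) (y, xinf) ⟨hy, hxinf⟩).tendsto.comp hpt
  have key : ∀ ε : ℝ, 0 < ε → f xinf ≤ u i y xinf + ε := by
    intro ε hε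
    refine le_of_tendsto_of_tendsto hft (hut.add tendsto_const_nhds) ?_
    exact (hgap i ε hε).mono fun k h => h y hy
  linarith [le_of_forall_pos_le_add key]
end

section
/- Let M ∈ ℝ^{n×n} be symmetric and define F : ℝ^{n×r} → ℝ by F(X) = ‖M − XXᵀ‖², where ‖·‖ is the Frobenius norm. Suppose X ≥ 0 componentwise, X ≠ 0, and X is a stationary point of the problem min { F(X) : X ≥ 0 }, i.e., ⟨4(XXᵀ − M)X, Z − X⟩ ≥ 0 for all Z ≥ 0, where ⟨A, B⟩ = tr(AᵀB). Then the function g(t) = F((1+t)X) satisfies g'(0) = 0 and g''(0) = 8‖XXᵀ‖² > 0; consequently, X is not a local maximum of F restricted to the nonnegative orthant {X ∈ ℝ^{n×r} : X ≥ 0}. -/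
open Matrix

attribute [local instance] Matrix.frobeniusNormedAddCommGroup Matrix.frobeniusNormedSpace

lemma frob_sq_eq_trace {m k : ℕ} (A : Matrix (Fin m) (Fin k) ℝ) :
    ‖A‖ ^ 2 = Matrix.trace (Aᵀ * A) := by
  rw [Matrix.frobenius_norm_def, ← Real.rpow_natCast _ 2, ← Real.rpow_mul (by positivity)]
  norm_num
  simp only [Matrix.trace, Matrix.diag, Matrix.mul_apply, Matrix.transpose_apply, pow_two]
  rw [Finset.sum_comm]

/-- if `X ≥ 0`, `X ≠ 0` is a stationary point of
`min { F(X) = ‖M − XXᵀ‖² : X ≥ 0 }`, i.e. `⟨4(XXᵀ − M)X, Z − X⟩ ≥ 0` for all `Z ≥ 0`,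
then `g(t) = F((1+t)X)` satisfies `g'(0) = 0` and `g''(0) = 8‖XXᵀ‖² > 0`; consequently
`X` is not a local maximum of `F` on the nonnegative orthant. -/
theorem stmt_18 {n r : ℕ} (M : Matrix (Fin n) (Fin n) ℝ) (hM : M.IsSymm)
    (F : Matrix (Fin n) (Fin r) ℝ → ℝ)
    (hF : ∀ Y : Matrix (Fin n) (Fin r) ℝ, F Y = ‖M - Y * Yᵀ‖ ^ 2)
    (X : Matrix (Fin n) (Fin r) ℝ) (hXnn : ∀ i j, 0 ≤ X i j) (hX0 : X ≠ 0)
    (hstat : ∀ Z : Matrix (Fin n) (Fin r) ℝ, (∀ i j, 0 ≤ Z i j) →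
      0 ≤ Matrix.trace (((4 : ℝ) • ((X * Xᵀ - M) * X))ᵀ * (Z - X)))
    (g : ℝ → ℝ) (hg : ∀ t : ℝ, g t = F (((1 + t) : ℝ) • X)) :
    HasDerivAt g 0 0 ∧
    HasDerivAt (deriv g) (8 * ‖X * Xᵀ‖ ^ 2) 0 ∧
    0 < 8 * ‖X * Xᵀ‖ ^ 2 ∧
    ¬ IsLocalMaxOn F {Y : Matrix (Fin n) (Fin r) ℝ | ∀ i j, 0 ≤ Y i j} X := by
  set N : Matrix (Fin n) (Fin n) ℝ := X * Xᵀ with hN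
  have hNsymm : Nᵀ = N := by
    rw [hN, Matrix.transpose_mul, Matrix.transpose_transpose]
  have hMsymm : Mᵀ = M := hM
  set a : ℝ := ‖M‖ ^ 2 with ha
  set b : ℝ := ‖N‖ ^ 2 with hb
  set c : ℝ := Matrix.trace (Mᵀ * N) with hc
  -- expansion of the squared norm
  have hexp : ∀ s : ℝ, ‖M - (s ^ 2) • N‖ ^ 2 = a - 2 * s ^ 2 * c + s ^ 4 * b := by
    intro s
    rw [frob_sq_eq_trace, ha, hb, frob_sq_eq_trace, frob_sq_eq_trace]
    have htr : Matrix.trace (N * M) = Matrix.trace (Mᵀ * N) := by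
      rw [← Matrix.trace_transpose (N * M), Matrix.transpose_mul, hNsymm]
    simp only [Matrix.transpose_sub, Matrix.transpose_smul, Matrix.sub_mul,
      Matrix.mul_sub, Matrix.smul_mul, Matrix.mul_smul, Matrix.trace_sub,
      Matrix.trace_smul, smul_smul, smul_eq_mul, hNsymm]
    rw [htr, hc]
    ring
  -- value of g
  have hgt : ∀ t : ℝ, g t = a - 2 * (1 + t) ^ 2 * c + (1 + t) ^ 4 * b := by
    intro t
    rw [hg, hF]
    have : ((1 + t : ℝ) • X) * ((1 + t : ℝ) • X)ᵀ = ((1 + t) ^ 2) • N := by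
      rw [Matrix.transpose_smul, Matrix.smul_mul, Matrix.mul_smul, smul_smul, hN, pow_two]
    rw [this, hexp]
  -- stationarity gives c = b
  have hcb : c = b := by
    have h1 := hstat ((2 : ℝ) • X) (fun i j => by
      simp only [Matrix.smul_apply, smul_eq_mul]
      nlinarith [hXnn i j])
    have h2 := hstat 0 (fun i j => le_refl 0)
    have e1 : ((2 : ℝ) • X) - X = X := by
      ext i j; simp [Matrix.smul_apply]; ring
    have e2 : (0 : Matrix (Fin n) (Fin r) ℝ) - X = (-1 : ℝ) • X := by
      ext i j; simp
    rw [e1] at h1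
    rw [e2] at h2
    have key : Matrix.trace (((X * Xᵀ - M) * X)ᵀ * X) = b - c := by
      rw [Matrix.transpose_mul, Matrix.mul_assoc, Matrix.trace_mul_comm,
        Matrix.mul_assoc, ← hN, Matrix.transpose_sub, hMsymm, hNsymm,
        Matrix.sub_mul, Matrix.trace_sub, hb, frob_sq_eq_trace, hNsymm, hc, hMsymm]
    have h1' : (0:ℝ) ≤ 4 * (b - c) := by
      rw [Matrix.transpose_smul, Matrix.smul_mul, Matrix.trace_smul, smul_eq_mul, key] at h1
      linarith
    have h2' : (0:ℝ) ≤ -4 * (b - c) := by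
      rw [Matrix.transpose_smul, Matrix.smul_mul, Matrix.mul_smul, Matrix.trace_smul,
        Matrix.trace_smul, smul_eq_mul, smul_eq_mul, key] at h2
      linarith
    linarith
  have hgt' : ∀ t : ℝ, g t = a - 2 * (1 + t) ^ 2 * b + (1 + t) ^ 4 * b := by
    intro t; rw [hgt, hcb]
  have hgfun : g = fun t : ℝ => a - 2 * (1 + t) ^ 2 * b + (1 + t) ^ 4 * b := funext hgt'
  -- N ≠ 0 hence b > 0
  have hbpos : 0 < b := by
    have hXij : ∃ i j, X i j ≠ 0 := by
      by_contra h
      push_neg at h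
      exact hX0 (by ext i j; simpa using h i j)
    obtain ⟨i, j, hij⟩ := hXij
    have hNii : 0 < N i i := by
      have : N i i = ∑ k, X i k * X i k := by
        simp [hN, Matrix.mul_apply]
      rw [this]
      have hpos : 0 < X i j * X i j := by
        have := hXnn i j
        rcases lt_or_eq_of_le this with h | h
        · exact mul_pos h h
        · exact absurd h.symm hij
      refine Finset.sum_pos' (fun k _ => mul_self_nonneg _) ⟨j, Finset.mem_univ j, hpos⟩
    have hN0 : N ≠ 0 := by
      intro h
      rw [h] at hNii
      simp at hNii
    have : 0 < ‖N‖ := norm_pos_iff.mpr hN0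
    positivity
  -- derivative of the polynomial
  have hd1 : ∀ t0 : ℝ, HasDerivAt (fun t : ℝ => a - 2 * (1 + t) ^ 2 * b + (1 + t) ^ 4 * b)
      (-4 * (1 + t0) * b + 4 * (1 + t0) ^ 3 * b) t0 := by
    intro t0
    have hid : HasDerivAt (fun t : ℝ => 1 + t) 1 t0 := (hasDerivAt_id t0).const_add 1
    have h2 := hid.pow 2
    have h4 := hid.pow 4
    have := ((hasDerivAt_const t0 a).sub ((h2.const_mul (2:ℝ)).mul_const b)).add
      (h4.mul_const b)
    refine this.congr_deriv ?_
    push_cast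
    ring
  have hgd : HasDerivAt g 0 0 := by
    rw [hgfun]
    convert hd1 0 using 1
    ring
  have hderiveq : deriv g = fun t0 : ℝ => -4 * (1 + t0) * b + 4 * (1 + t0) ^ 3 * b := by
    rw [hgfun]
    exact funext fun t0 => (hd1 t0).deriv
  have hgd2 : HasDerivAt (deriv g) (8 * ‖X * Xᵀ‖ ^ 2) 0 := by
    rw [hderiveq]
    have hid : HasDerivAt (fun t : ℝ => 1 + t) 1 (0:ℝ) := (hasDerivAt_id 0).const_add 1
    have h3 := hid.pow 3
    have hcomb := ((hid.const_mul (-4:ℝ)).mul_const b).add ((h3.const_mul (4:ℝ)).mul_const b)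
    refine hcomb.congr_deriv ?_
    rw [hb, hN]
    push_cast
    ring
  refine ⟨hgd, hgd2, by have := hbpos; rw [hb, hN] at this; linarith, ?_⟩
  intro hmax
  set S : Set (Matrix (Fin n) (Fin r) ℝ) := {Y | ∀ i j, 0 ≤ Y i j} with hS
  have hmax' : ∀ᶠ Y in nhdsWithin X S, F Y ≤ F X := hmax
  have hφcont : Filter.Tendsto (fun t : ℝ => ((1 + t) : ℝ) • X) (nhdsWithin 0 (Set.Ioi 0))
      (nhdsWithin X S) := by
    apply tendsto_nhdsWithin_of_tendsto_nhds_of_eventually_within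
    · have : Filter.Tendsto (fun t : ℝ => ((1 + t) : ℝ) • X) (nhds 0) (nhds (((1+(0:ℝ)) : ℝ) • X)) :=
        (Filter.Tendsto.smul (Continuous.tendsto (continuous_const.add continuous_id) 0)
          tendsto_const_nhds)
      simpa using this.mono_left nhdsWithin_le_nhds
    · filter_upwards [self_mem_nhdsWithin] with t ht
      intro i j
      have : (0:ℝ) ≤ 1 + t := by
        have : (0:ℝ) < t := ht
        linarith
      simpa using mul_nonneg this (hXnn i j)
  have hev := hφcont.eventually hmax'
  obtain ⟨t, h1, h2⟩ := (hev.and self_mem_nhdsWithin).exists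
  have ht : (0:ℝ) < t := h2
  have hFX : F X = g 0 := by
    rw [hg 0]
    norm_num
  have hgt0 : g t ≤ g 0 := by
    rw [hg t, ← hFX]
    exact h1
  rw [hgt' t, hgt' 0] at hgt0
  have h' : (0:ℝ) < (1 + t) ^ 2 - 1 := by nlinarith
  have hq : (0:ℝ) < ((1 + t) ^ 2 - 1) ^ 2 := pow_pos h' 2
  nlinarith [mul_pos hbpos hq]
end
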